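/- Let G be a group, and let X₁ and X₂ be two finite generating sets of G, with alphabets A₁ = X₁ ⊕ X₁ and A₂ = X₂ ⊕ X₂ and canonical monoid homomorphisms π₁ : A₁* → G and π₂ : A₂* → G. If the word problem W_{A₁}(G) = { w ∈ A₁* : π₁(w) = 1 } is a context-free language, then the word problem W_{A₂}(G) = { w ∈ A₂* : π₂(w) = 1 } is also a context-free language. -/

import Mathlib

/-- The canonical monoid homomorphism `A* → G` for the alphabet `A = X ⊕ X`,
sending the first copy of `x` to `f x` and the second copy to `(f x)⁻¹`. -/
def wordProblemHom {X G : Type} [Group G] (f : X → G) : FreeMonoid (X ⊕ X) →* G :=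
  FreeMonoid.lift (Sum.elim f fun x => (f x)⁻¹)

/-- The word problem of `G` with respect to the alphabet `A = X ⊕ X`. -/
def wordProblem {X G : Type} [Group G] (f : X → G) : Language (X ⊕ X) :=
  { w : List (X ⊕ X) | wordProblemHom f (FreeMonoid.ofList w) = 1 }


section WordVal
variable {X G : Type} [Group G]

/-- Letter values. -/
def nuF (f : X → G) : (X ⊕ X) → G := Sum.elim f fun x => (f x)⁻¹

/-- Value of a word. -/
def valW (f : X → G) (u : List (X ⊕ X)) : G := (u.map (nuF f)).prod

@[simp] lemma valW_nil (f : X → G) : valW f [] = 1 := rfl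

@[simp] lemma valW_cons (f : X → G) (a : X ⊕ X) (u : List (X ⊕ X)) :
    valW f (a :: u) = nuF f a * valW f u := by simp [valW]

@[simp] lemma valW_append (f : X → G) (u v : List (X ⊕ X)) :
    valW f (u ++ v) = valW f u * valW f v := by simp [valW]

@[simp] lemma valW_replicate (f : X → G) (m : ℕ) (a : X ⊕ X) :
    valW f (List.replicate m a) = (nuF f a) ^ m := by
  induction m with
  | zero => simp
  | succ m ih => rw [List.replicate_succ]; simp [ih, pow_succ']

/-- The swap of a letter. -/
def sswap : X ⊕ X → X ⊕ X := Sum.elim Sum.inr Sum.inl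

@[simp] lemma nuF_sswap (f : X → G) (a : X ⊕ X) : nuF f (sswap a) = (nuF f a)⁻¹ := by
  cases a <;> simp [nuF, sswap]

lemma valW_winv (f : X → G) (u : List (X ⊕ X)) :
    valW f ((u.map sswap).reverse) = (valW f u)⁻¹ := by
  induction u with
  | nil => simp
  | cons a u ih => simp [ih, mul_comm]

lemma wordProblemHom_eq_valW (f : X → G) (u : List (X ⊕ X)) :
    wordProblemHom f (FreeMonoid.ofList u) = valW f u := by
  induction u with
  | nil => exact map_one (wordProblemHom f)
  | cons a u ih =>
    have : FreeMonoid.ofList (a :: u) = FreeMonoid.of a * FreeMonoid.ofList u := rfl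
    rw [this, map_mul, ih]
    simp [wordProblemHom, valW, nuF]

lemma exists_word_of_closure (f : X → G) (h : Subgroup.closure (Set.range f) = ⊤) (g : G) :
    ∃ u : List (X ⊕ X), valW f u = g := by
  have hg : g ∈ Subgroup.closure (Set.range f) := by rw [h]; trivial
  induction hg using Subgroup.closure_induction with
  | mem x hx =>
    obtain ⟨x₀, rfl⟩ := hx
    exact ⟨[Sum.inl x₀], by simp [nuF]⟩
  | one => exact ⟨[], by simp⟩
  | mul a b _ _ iha ihb =>
    obtain ⟨u, hu⟩ := iha
    obtain ⟨v, hv⟩ := ihb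
    exact ⟨u ++ v, by simp [hu, hv]⟩
  | inv a _ iha =>
    obtain ⟨u, hu⟩ := iha
    exact ⟨(u.map sswap).reverse, by rw [valW_winv, hu]⟩

end WordVal
section Transducer
variable {Δ S Q N : Type}

inductive TRun (δ : Q → Δ → Option (Q × List S)) : Q → List Δ → Q → List S → Prop
  | nil (q : Q) : TRun δ q [] q []
  | cons {p p' q : Q} {u : List Δ} {w : List S} (d : Δ) (o : List S)
      (hδ : δ p d = some (p', o)) (h : TRun δ p' u q w) : TRun δ p (d :: u) q (o ++ w)

lemma TRun.append {δ : Q → Δ → Option (Q × List S)} {p m q : Q} {u v : List Δ}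
    {w₁ w₂ : List S} (h₁ : TRun δ p u m w₁) (h₂ : TRun δ m v q w₂) :
    TRun δ p (u ++ v) q (w₁ ++ w₂) := by
  induction h₁ with
  | nil => simpa
  | cons d o hδ h ih => simpa using TRun.cons d o hδ (ih h₂)

inductive TRel (δ : Q → Δ → Option (Q × List S)) :
    Q → List (Symbol Δ N) → List (Symbol S (N × Q × Q)) → Q → Prop
  | nil (p : Q) : TRel δ p [] [] p
  | nt {q q' : Q} {α : List (Symbol Δ N)} {α' : List (Symbol S (N × Q × Q))} (B : N) (p : Q)
      (h : TRel δ q α α' q') :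
      TRel δ p (Symbol.nonterminal B :: α) (Symbol.nonterminal (B, p, q) :: α') q'
  | tm {p q' : Q} {α : List (Symbol Δ N)} {α' : List (Symbol S (N × Q × Q))} (d : Δ) (p' : Q)
      (o : List S) (hδ : δ p d = some (p', o)) (h : TRel δ p' α α' q') :
      TRel δ p (Symbol.terminal d :: α) (o.map Symbol.terminal ++ α') q'

variable {δ : Q → Δ → Option (Q × List S)}

lemma TRel.append {p m q : Q} {x y : List (Symbol Δ N)} {x' y' : List (Symbol S (N × Q × Q))}
    (h₁ : TRel δ p x x' m) (h₂ : TRel δ m y y' q) :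
    TRel δ p (x ++ y) (x' ++ y') q := by
  induction h₁ with
  | nil => simpa
  | nt B p h ih => exact TRel.nt B p (ih h₂)
  | tm d p' o hδ h ih => simpa using TRel.tm d p' o hδ (ih h₂)

lemma TRel.split {p q : Q} {x y : List (Symbol Δ N)} {γ : List (Symbol S (N × Q × Q))}
    (h : TRel δ p (x ++ y) γ q) :
    ∃ x' y' m, γ = x' ++ y' ∧ TRel δ p x x' m ∧ TRel δ m y y' q := by
  induction x generalizing p γ with
  | nil => exact ⟨[], γ, p, rfl, TRel.nil p, h⟩
  | cons s xs ih =>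
    cases h with
    | nt B p h =>
      obtain ⟨x', y', m, rfl, h₁, h₂⟩ := ih h
      exact ⟨_ :: x', y', m, rfl, TRel.nt B p h₁, h₂⟩
    | tm d p' o hδ h =>
      obtain ⟨x', y', m, rfl, h₁, h₂⟩ := ih h
      exact ⟨o.map Symbol.terminal ++ x', y', m, by simp, TRel.tm d p' o hδ h₁, h₂⟩

lemma TRel.of_run {p q : Q} {u : List Δ} {w : List S} (h : TRun δ p u q w) :
    TRel (N := N) δ p (u.map Symbol.terminal) (w.map Symbol.terminal) q := by
  induction h with
  | nil => exact TRel.nil _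
  | cons d o hδ h ih => simpa using TRel.tm d _ o hδ ih

lemma TRel.singleton_nt {p q : Q} {B : N} {γ : List (Symbol S (N × Q × Q))}
    (h : TRel δ p [Symbol.nonterminal B] γ q) :
    γ = [Symbol.nonterminal (B, p, q)] := by
  cases h with
  | nt B p h => cases h; rfl

lemma TRel.inv_nt {p q : Q} {α : List (Symbol Δ N)} {γ : List (Symbol S (N × Q × Q))}
    (h : TRel δ p α γ q) :
    ∀ (x' : List (Symbol S (N × Q × Q))) (n' : N × Q × Q) (y' : List (Symbol S (N × Q × Q))),
      γ = x' ++ Symbol.nonterminal n' :: y' →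
      ∃ x y p₁ q₁ B, α = x ++ Symbol.nonterminal B :: y ∧ n' = (B, p₁, q₁) ∧
        TRel δ p x x' p₁ ∧ TRel δ q₁ y y' q := by
  induction h with
  | nil p => intro x' n' y' hx; simp at hx
  | @nt m q' α α' B p h ih =>
    intro x' n' y' hx
    cases x' with
    | nil =>
      simp only [List.nil_append, List.cons.injEq] at hx
      obtain ⟨h1, rfl⟩ := hx
      exact ⟨[], α, p, m, B, rfl, (Symbol.nonterminal.inj h1).symm, TRel.nil p, h⟩
    | cons s x'' =>
      simp only [List.cons_append, List.cons.injEq] at hx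
      obtain ⟨rfl, hx⟩ := hx
      obtain ⟨x, y, p₁, q₁, B', rfl, rfl, h₁, h₂⟩ := ih x'' n' y' hx
      exact ⟨Symbol.nonterminal B :: x, y, p₁, q₁, B', rfl, rfl, TRel.nt B p h₁, h₂⟩
  | @tm p q' α α' d p' o hδ h ih =>
    intro x' n' y' hx
    have hsplit : ∃ x'', x' = o.map Symbol.terminal ++ x'' ∧
        α' = x'' ++ Symbol.nonterminal n' :: y' := by
      rcases List.append_eq_append_iff.mp hx with ⟨c, hc1, hc2⟩ | ⟨c, hc1, hc2⟩
      · exact ⟨c, hc1, hc2⟩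
      · cases c with
        | nil =>
          refine ⟨[], by simpa using hc1.symm, by simpa using hc2.symm⟩
        | cons s c' =>
          exfalso
          have hs : s ∈ o.map Symbol.terminal := by rw [hc1]; simp
          simp only [List.cons_append, List.cons.injEq] at hc2
          obtain ⟨rfl, -⟩ := hc2
          simp at hs
    obtain ⟨x'', rfl, hα'⟩ := hsplit
    obtain ⟨x, y, p₁, q₁, B', rfl, rfl, h₁, h₂⟩ := ih x'' n' y' hα'
    exact ⟨Symbol.terminal d :: x, y, p₁, q₁, B', rfl, rfl, by simpa using TRel.tm d p' o hδ h₁, h₂⟩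

lemma Symbol.terminal_injective : Function.Injective (Symbol.terminal : S → Symbol S (N × Q × Q)) := by
  intro a b h; cases h; rfl

lemma TRel.all_terminal' {p q : Q} {α : List (Symbol Δ N)} {γ : List (Symbol S (N × Q × Q))}
    (h : TRel δ p α γ q) :
    ∀ w : List S, γ = w.map Symbol.terminal →
    ∃ u, α = u.map Symbol.terminal ∧ TRun δ p u q w := by
  induction h with
  | nil p =>
    intro w hw
    have : w = [] := by cases w <;> simp_all
    subst this
    exact ⟨[], rfl, TRun.nil _⟩
  | nt B p h ih =>
    intro w hw
    exfalso; cases w <;> simp_all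
  | @tm p q' α α' d p' o hδ h ih =>
    intro w hw
    obtain ⟨w₁, w₂, rfl, hw₁, hw₂⟩ := List.map_eq_append_iff.mp hw.symm
    have hw₁' : w₁ = o := List.map_injective_iff.mpr Symbol.terminal_injective (by simpa using hw₁)
    obtain ⟨u', rfl, hrun⟩ := ih w₂ hw₂.symm
    exact ⟨d :: u', rfl, by rw [hw₁']; exact TRun.cons d o hδ hrun⟩

lemma TRel.all_terminal {p q : Q} {α : List (Symbol Δ N)} {w : List S}
    (h : TRel δ p α ((w.map Symbol.terminal : List (Symbol S (N × Q × Q)))) q) :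
    ∃ u, α = u.map Symbol.terminal ∧ TRun δ p u q w :=
  TRel.all_terminal' h w rfl


section Grammar
open ContextFreeGrammar
variable {Δ S Q : Type} [Fintype Q]

/-- All annotated versions of a sentential form. -/
noncomputable def annotate {N : Type} (δ : Q → Δ → Option (Q × List S)) :
    List (Symbol Δ N) → Q → Q → List (List (Symbol S (N × Q × Q)))
  | [], p, q => by classical exact if p = q then [[]] else []
  | Symbol.nonterminal B :: rest, p, q =>
      (Finset.univ : Finset Q).toList.flatMap
        (fun m => (annotate δ rest m q).map (Symbol.nonterminal (B, p, m) :: ·))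
  | Symbol.terminal d :: rest, p, q =>
      match δ p d with
      | none => []
      | some (p', o) => (annotate δ rest p' q).map (o.map Symbol.terminal ++ ·)

lemma mem_annotate_iff {N : Type} (δ : Q → Δ → Option (Q × List S))
    (s : List (Symbol Δ N)) (p q : Q) (γ : List (Symbol S (N × Q × Q))) :
    γ ∈ annotate δ s p q ↔ TRel δ p s γ q := by
  induction s generalizing p γ with
  | nil =>
    constructor
    · intro hm
      simp only [annotate] at hm
      split at hm
      · rename_i hpq; subst hpq; simp at hm; subst hm; exact TRel.nil p
      · simp at hm
    · intro h; cases h; simp [annotate]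
  | cons s rest ih =>
    cases s with
    | nonterminal B =>
      constructor
      · intro hm
        simp only [annotate, List.mem_flatMap, List.mem_map] at hm
        obtain ⟨m, -, γ', hγ', rfl⟩ := hm
        exact TRel.nt B p ((ih _ _).mp hγ')
      · intro h
        cases h with
        | nt B p h =>
          simp only [annotate, List.mem_flatMap, List.mem_map]
          exact ⟨_, by simp [Finset.mem_toList], _, (ih _ _).mpr h, rfl⟩
    | terminal d =>
      constructor
      · intro hm
        simp only [annotate] at hm
        rcases hδ : δ p d with - | ⟨p', o⟩ <;> rw [hδ] at hm
        · simp at hm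
        · simp only [List.mem_map] at hm
          obtain ⟨γ', hγ', rfl⟩ := hm
          exact TRel.tm d p' o hδ ((ih _ _).mp hγ')
      · intro h
        cases h with
        | tm d p' o hδ h =>
          simp only [annotate, hδ, List.mem_map]
          exact ⟨_, (ih _ _).mpr h, rfl⟩

/-- The transduced grammar. -/
noncomputable def transGrammar (g : ContextFreeGrammar Δ) (δ : Q → Δ → Option (Q × List S))
    (q0 : Q) : ContextFreeGrammar S := by
  classical
  exact
  { NT := g.NT × Q × Q
    initial := (g.initial, q0, q0)
    rules := (g.rules.toList.flatMap (fun r =>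
      (Finset.univ : Finset (Q × Q)).toList.flatMap (fun pq =>
        (annotate δ r.output pq.1 pq.2).map
          (fun o => ⟨(r.input, pq.1, pq.2), o⟩)))).toFinset }

lemma mem_transGrammar_rules_iff {g : ContextFreeGrammar Δ}
    {δ : Q → Δ → Option (Q × List S)} {q0 : Q}
    (r' : ContextFreeRule S (g.NT × Q × Q)) :
    r' ∈ (transGrammar g δ q0).rules ↔
      ∃ r ∈ g.rules, ∃ p q : Q, r'.input = (r.input, p, q) ∧ TRel δ p r.output r'.output q := by
  classical
  change r' ∈ (g.rules.toList.flatMap (fun r =>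
      (Finset.univ : Finset (Q × Q)).toList.flatMap (fun pq =>
        (annotate δ r.output pq.1 pq.2).map
          (fun o => (⟨(r.input, pq.1, pq.2), o⟩ : ContextFreeRule S (g.NT × Q × Q)))))).toFinset ↔ _
  simp only [List.mem_toFinset, List.mem_flatMap, List.mem_map,
    Finset.mem_toList]
  constructor
  · rintro ⟨r, hr, ⟨p, q⟩, -, o, ho, rfl⟩
    exact ⟨r, hr, p, q, rfl, (mem_annotate_iff _ _ _ _ _).mp ho⟩
  · rintro ⟨r, hr, p, q, h1, h2⟩
    refine ⟨r, hr, ⟨p, q⟩, by simp, r'.output, (mem_annotate_iff _ _ _ _ _).mpr h2, ?_⟩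
    cases r'; simp_all
end Grammar
section Sim
open ContextFreeGrammar
variable {Δ S Q : Type} [Fintype Q] {g : ContextFreeGrammar Δ}
  {δ : Q → Δ → Option (Q × List S)} {q0 : Q}

lemma trans_produces_sim {α : List (Symbol Δ g.NT)}
    {α' β'' : List (Symbol S ((transGrammar g δ q0).NT))} {p q : Q}
    (hp : (transGrammar g δ q0).Produces α' β'') (hrel : TRel δ p α α' q) :
    ∃ β, g.Produces α β ∧ TRel δ p β β'' q := by
  obtain ⟨r', hr', hrw⟩ := hp
  obtain ⟨x', y', hα', hβ''⟩ := hrw.exists_parts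
  obtain ⟨r, hr, p₁, q₁, hin, hout⟩ := (mem_transGrammar_rules_iff r').mp hr'
  obtain ⟨x, y, p₂, q₂, B, rfl, hBpq, h₁, h₂⟩ := hrel.inv_nt x' r'.input y' (hα'.trans (by simp; rfl))
  rw [hin] at hBpq
  obtain ⟨hB, hp₂, hq₂⟩ : r.input = B ∧ p₁ = p₂ ∧ q₁ = q₂ := by
    refine ⟨?_, ?_, ?_⟩ <;> simp_all [Prod.ext_iff]
  subst hB hp₂ hq₂
  refine ⟨x ++ r.output ++ y, ⟨r, hr, ?_⟩, ?_⟩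
  · simpa using r.rewrites_of_exists_parts x y
  · rw [hβ'']
    have := (h₁.append (hout.append h₂))
    simp only [List.append_assoc]; exact this

lemma trans_derives_sim {α' β'' : List (Symbol S ((transGrammar g δ q0).NT))}
    (hd : (transGrammar g δ q0).Derives α' β'') :
    ∀ {p q : Q} {α : List (Symbol Δ g.NT)}, TRel δ p α α' q →
    ∃ β, g.Derives α β ∧ TRel δ p β β'' q := by
  induction hd with
  | refl => exact fun h => ⟨_, by rfl, h⟩
  | tail hs hp ih =>
    intro p q α hrel
    obtain ⟨β, hd₁, hrel₁⟩ := ih hrel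
    obtain ⟨β₂, hp₂, hrel₂⟩ := trans_produces_sim hp hrel₁
    exact ⟨β₂, hd₁.trans_produces hp₂, hrel₂⟩

lemma trans_derives_complete {α : List (Symbol Δ g.NT)} {u : List Δ}
    (hd : g.Derives α (u.map Symbol.terminal)) :
    ∀ {p q : Q} {w : List S}, TRun δ p u q w →
    ∃ α', TRel δ p α α' q ∧
      (transGrammar g δ q0).Derives α' (w.map Symbol.terminal) := by
  induction hd using Relation.ReflTransGen.head_induction_on with
  | refl => exact fun hr => ⟨_, TRel.of_run hr, by rfl⟩
  | head hp hd ih =>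
    intro p q w hrun
    obtain ⟨β', hrelβ, hdβ⟩ := ih hrun
    obtain ⟨r, hr, hrw⟩ := hp
    obtain ⟨x, y, hα, hβ⟩ := hrw.exists_parts
    rw [hβ] at hrelβ
    obtain ⟨x', rest, m₁, rfl, h₁, hrest⟩ := TRel.split (by simpa using hrelβ)
    obtain ⟨mid', y', m₂, rfl, h₂, h₃⟩ := TRel.split hrest
    refine ⟨x' ++ Symbol.nonterminal (r.input, m₁, m₂) :: y', ?_, ?_⟩
    · rw [hα]
      have : TRel δ m₁ [Symbol.nonterminal r.input]
          [Symbol.nonterminal (r.input, m₁, m₂)] m₂ := TRel.nt r.input m₁ (TRel.nil m₂)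
      simpa using h₁.append (this.append h₃)
    · refine Relation.ReflTransGen.head ⟨⟨(r.input, m₁, m₂), mid'⟩, ?_, ?_⟩ (by simpa using hdβ)
      · exact (mem_transGrammar_rules_iff _).mpr ⟨r, hr, m₁, m₂, rfl, h₂⟩
      · have h := ContextFreeRule.rewrites_of_exists_parts
          (⟨(r.input, m₁, m₂), mid'⟩ : ContextFreeRule S (g.NT × Q × Q)) x' y'
        simp at h ⊢; exact h

/-- Main closure theorem: context-free languages are closed under transducer preimages. -/
theorem transGrammar_language (g : ContextFreeGrammar Δ)
    (δ : Q → Δ → Option (Q × List S)) (q0 : Q) :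
    (transGrammar g δ q0).language = { w | ∃ u ∈ g.language, TRun δ q0 u q0 w } := by
  ext w
  simp only [Set.mem_setOf_eq, mem_language_iff]
  constructor
  · intro hd
    have hrel : TRel δ q0 [Symbol.nonterminal g.initial]
        [Symbol.nonterminal (transGrammar g δ q0).initial] q0 :=
      TRel.nt g.initial q0 (TRel.nil q0)
    obtain ⟨β, hdβ, hrelβ⟩ := trans_derives_sim hd hrel
    obtain ⟨u, rfl, hrun⟩ := TRel.all_terminal hrelβ
    exact ⟨u, hdβ, hrun⟩
  · rintro ⟨u, hu, hrun⟩
    obtain ⟨α', hrel, hd⟩ := trans_derives_complete (q0 := q0) hu hrun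
    rwa [TRel.singleton_nt hrel] at hd

end Sim
section Code
attribute [local instance] Classical.propDecidable
variable {X₁ X₂ G : Type} [Group G] [Fintype (X₂ ⊕ X₂)]
variable (f₁ : X₁ → G) (f₂ : X₂ → G) (x₀ : X₁) (wd : G → List (X₁ ⊕ X₁))

/-- The body of the code word of a letter. -/
noncomputable def bodyW (a : X₂ ⊕ X₂) : List (X₁ ⊕ X₁) :=
  wd (f₁ x₀ * (f₁ x₀ ^ (((Fintype.equivFin (X₂ ⊕ X₂)) a : ℕ) + 1))⁻¹ * nuF f₂ a)

/-- Max body length. -/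
noncomputable def KK : ℕ := Finset.univ.sup fun a => (bodyW f₁ f₂ x₀ wd a).length

lemma bodyW_len_le (a : X₂ ⊕ X₂) : (bodyW f₁ f₂ x₀ wd a).length ≤ KK f₁ f₂ x₀ wd :=
  Finset.le_sup (f := fun a => (bodyW f₁ f₂ x₀ wd a).length) (Finset.mem_univ a)

/-- The code word of a letter. -/
noncomputable def codeW (a : X₂ ⊕ X₂) : List (X₁ ⊕ X₁) :=
  List.replicate (((Fintype.equivFin (X₂ ⊕ X₂)) a : ℕ) + 1) (Sum.inl x₀) ++
    Sum.inr x₀ :: bodyW f₁ f₂ x₀ wd a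

/-- State space of the decoding transducer. -/
def QT : Type :=
  Option (Fin (Fintype.card (X₂ ⊕ X₂)) ⊕ (X₂ ⊕ X₂) × Fin (KK f₁ f₂ x₀ wd + 1))

noncomputable instance : Fintype (QT f₁ f₂ x₀ wd) := by
  classical
  unfold QT
  infer_instance

/-- The decoding transducer. -/
noncomputable def tdelta : QT f₁ f₂ x₀ wd → (X₁ ⊕ X₁) → Option (QT f₁ f₂ x₀ wd × List (X₂ ⊕ X₂)) :=
  fun q d =>
    match q with
    | none =>
        if d = Sum.inl x₀ then
          (if h : 0 < Fintype.card (X₂ ⊕ X₂) then some (some (Sum.inl ⟨0, h⟩), []) else none)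
        else none
    | some (Sum.inl c) =>
        if d = Sum.inl x₀ then
          (if h : c.1 + 1 < Fintype.card (X₂ ⊕ X₂) then
            some (some (Sum.inl ⟨c.1 + 1, h⟩), []) else none)
        else if d = Sum.inr x₀ then
          (let a := (Fintype.equivFin (X₂ ⊕ X₂)).symm c
           if (bodyW f₁ f₂ x₀ wd a).length = 0 then some (none, [a])
           else some (some (Sum.inr (a, ⟨0, Nat.succ_pos _⟩)), [a]))
        else none
    | some (Sum.inr (a, j)) =>
        if (bodyW f₁ f₂ x₀ wd a)[j.1]? = some d then
          (if j.1 + 1 = (bodyW f₁ f₂ x₀ wd a).length then some (none, [])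
           else if h : j.1 + 1 < KK f₁ f₂ x₀ wd + 1 then
             some (some (Sum.inr (a, ⟨j.1 + 1, h⟩)), []) else none)
        else none

lemma bodyRun (a : X₂ ⊕ X₂) :
    ∀ (l : List (X₁ ⊕ X₁)) (j : ℕ) (hK : j < KK f₁ f₂ x₀ wd + 1),
      (bodyW f₁ f₂ x₀ wd a).drop j = l → j < (bodyW f₁ f₂ x₀ wd a).length →
      TRun (tdelta f₁ f₂ x₀ wd) (some (Sum.inr (a, ⟨j, hK⟩))) l none [] := by
  intro l
  induction l with
  | nil =>
    intro j hK hdrop hj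
    exfalso
    rw [List.drop_eq_nil_iff] at hdrop
    omega
  | cons d l' ih =>
    intro j hK hdrop hj
    have hget : (bodyW f₁ f₂ x₀ wd a)[j]? = some d := by
      have : ((bodyW f₁ f₂ x₀ wd a).drop j)[0]? = (bodyW f₁ f₂ x₀ wd a)[j + 0]? :=
        List.getElem?_drop
      rw [hdrop] at this
      simpa using this.symm
    have hdrop' : (bodyW f₁ f₂ x₀ wd a).drop (j + 1) = l' := by
      rw [← List.tail_drop, hdrop]; rfl
    by_cases hlast : j + 1 = (bodyW f₁ f₂ x₀ wd a).length
    · have hl' : l' = [] := by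
        rw [← hdrop', List.drop_eq_nil_iff]; omega
      subst hl'
      have hδ : tdelta f₁ f₂ x₀ wd (some (Sum.inr (a, ⟨j, hK⟩))) d = some (none, []) := by
        simp [tdelta, hget, hlast]; rfl
      exact (TRun.cons d [] hδ (TRun.nil _) : TRun _ _ ([d]) _ ([] ++ []))
    · have hj1 : j + 1 < (bodyW f₁ f₂ x₀ wd a).length := by omega
      have hK1 : j + 1 < KK f₁ f₂ x₀ wd + 1 := by
        have := bodyW_len_le f₁ f₂ x₀ wd a; omega
      have hδ : tdelta f₁ f₂ x₀ wd (some (Sum.inr (a, ⟨j, hK⟩))) d =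
          some (some (Sum.inr (a, ⟨j + 1, hK1⟩)), []) := by
        simp only [tdelta, hget, hlast]
        simp [hK1]; rfl
      exact (TRun.cons d [] hδ (ih (j+1) hK1 hdrop' hj1) : TRun _ _ _ _ ([] ++ []))

lemma countRun (i : ℕ) (hi : i < Fintype.card (X₂ ⊕ X₂)) :
    TRun (tdelta f₁ f₂ x₀ wd) none (List.replicate (i + 1) (Sum.inl x₀))
      (some (Sum.inl ⟨i, hi⟩)) [] := by
  induction i with
  | zero =>
    have hδ : tdelta f₁ f₂ x₀ wd none (Sum.inl x₀) = some (some (Sum.inl ⟨0, hi⟩), []) := by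
      simp [tdelta, hi]; rfl
    exact (TRun.cons _ [] hδ (TRun.nil _) : TRun _ _ _ _ ([] ++ []))
  | succ i ih =>
    have h1 : List.replicate (i + 2) (Sum.inl x₀ : X₁ ⊕ X₁) =
        List.replicate (i + 1) (Sum.inl x₀) ++ [Sum.inl x₀] := List.replicate_succ'
    have hδ : tdelta f₁ f₂ x₀ wd (some (Sum.inl ⟨i, Nat.lt_of_succ_lt hi⟩)) (Sum.inl x₀) =
        some (some (Sum.inl ⟨i + 1, hi⟩), []) := by
      simp [tdelta, hi]; rfl
    have step : TRun (tdelta f₁ f₂ x₀ wd) (some (Sum.inl ⟨i, Nat.lt_of_succ_lt hi⟩))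
        [Sum.inl x₀] (some (Sum.inl ⟨i + 1, hi⟩)) [] :=
      (TRun.cons _ [] hδ (TRun.nil _) : TRun _ _ _ _ ([] ++ []))
    rw [h1]
    exact (TRun.append (ih (Nat.lt_of_succ_lt hi)) step : TRun _ _ _ _ ([] ++ []))

lemma codeRun (a : X₂ ⊕ X₂) :
    TRun (tdelta f₁ f₂ x₀ wd) none (codeW f₁ f₂ x₀ wd a) none [a] := by
  set e := Fintype.equivFin (X₂ ⊕ X₂)
  have hlt : (e a : ℕ) < Fintype.card (X₂ ⊕ X₂) := (e a).isLt
  have hcount := countRun f₁ f₂ x₀ wd (e a) hlt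
  have hea : (⟨(e a : ℕ), hlt⟩ : Fin _) = e a := Fin.eta _ _
  rw [hea] at hcount
  have hsymm : e.symm (e a) = a := Equiv.symm_apply_apply _ _
  have htail : TRun (tdelta f₁ f₂ x₀ wd) (some (Sum.inl (e a)))
      (Sum.inr x₀ :: bodyW f₁ f₂ x₀ wd a) none [a] := by
    by_cases hb : (bodyW f₁ f₂ x₀ wd a).length = 0
    · have hnil : bodyW f₁ f₂ x₀ wd a = [] := List.length_eq_zero_iff.mp hb
      have hδ : tdelta f₁ f₂ x₀ wd (some (Sum.inl (e a))) (Sum.inr x₀) = some (none, [a]) := by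
        simp [tdelta, e, hnil]; rfl
      rw [hnil]
      exact (TRun.cons _ [a] hδ (TRun.nil _) : TRun _ _ _ _ ([a] ++ []))
    · have hδ : tdelta f₁ f₂ x₀ wd (some (Sum.inl (e a))) (Sum.inr x₀) =
          some (some (Sum.inr (a, ⟨0, Nat.succ_pos _⟩)), [a]) := by
        simp [tdelta, e, (not_congr List.length_eq_zero_iff).mp hb]; rfl
      have hrun := bodyRun f₁ f₂ x₀ wd a (bodyW f₁ f₂ x₀ wd a) 0 (Nat.succ_pos _) (by simp)
        (by omega)
      exact (TRun.cons _ [a] hδ hrun : TRun _ _ _ _ ([a] ++ []))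
  have := TRun.append hcount htail
  simpa [codeW] using this

lemma encodeRun (w : List (X₂ ⊕ X₂)) :
    TRun (tdelta f₁ f₂ x₀ wd) none (w.flatMap (codeW f₁ f₂ x₀ wd)) none w := by
  induction w with
  | nil => exact TRun.nil _
  | cons a w' ih =>
    have := TRun.append (codeRun f₁ f₂ x₀ wd a) ih
    simpa using this

end Code
section Decode
attribute [local instance] Classical.propDecidable
variable {X₁ X₂ G : Type} [Group G] [Fintype (X₂ ⊕ X₂)]
variable (f₁ : X₁ → G) (f₂ : X₂ → G) (x₀ : X₁) (wd : G → List (X₁ ⊕ X₁))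

lemma bodyInv (a : X₂ ⊕ X₂) :
    ∀ (v : List (X₁ ⊕ X₁)) (j : Fin (KK f₁ f₂ x₀ wd + 1)) (w : List (X₂ ⊕ X₂)),
      TRun (tdelta f₁ f₂ x₀ wd) (some (Sum.inr (a, j))) v none w →
      j.1 < (bodyW f₁ f₂ x₀ wd a).length →
      ∃ v', v = (bodyW f₁ f₂ x₀ wd a).drop j.1 ++ v' ∧
        TRun (tdelta f₁ f₂ x₀ wd) none v' none w := by
  intro v
  induction v with
  | nil => intro j w hr hj; cases hr
  | cons d v₂ ih =>
    intro j w hr hj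
    cases hr with
    | cons d o hδ hrest =>
      rename_i p' w₂
      simp only [tdelta] at hδ
      by_cases hget : (bodyW f₁ f₂ x₀ wd a)[j.1]? = some d
      swap
      · simp [hget] at hδ
      rw [if_pos hget] at hδ
      have hdropj : (bodyW f₁ f₂ x₀ wd a).drop j.1 =
          d :: (bodyW f₁ f₂ x₀ wd a).drop (j.1 + 1) := by
        rw [List.drop_eq_getElem_cons hj]
        congr 1
        have := List.getElem?_eq_getElem hj
        rw [hget] at this
        exact (Option.some.inj this).symm
      by_cases hlast : j.1 + 1 = (bodyW f₁ f₂ x₀ wd a).length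
      · rw [if_pos hlast] at hδ
        obtain ⟨rfl, rfl⟩ : p' = none ∧ o = [] := by
          have hδ := Prod.mk.inj (Option.some.inj hδ)
          exact ⟨hδ.1.symm, hδ.2.symm⟩
        refine ⟨v₂, ?_, hrest⟩
        rw [hdropj]
        have : (bodyW f₁ f₂ x₀ wd a).drop (j.1 + 1) = [] := by
          rw [List.drop_eq_nil_iff]; omega
        simp [this]
      · rw [if_neg hlast] at hδ
        have hK1 : j.1 + 1 < KK f₁ f₂ x₀ wd + 1 := by
          have := bodyW_len_le f₁ f₂ x₀ wd a; omega
        rw [dif_pos hK1] at hδ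
        obtain ⟨rfl, rfl⟩ : p' = some (Sum.inr (a, ⟨j.1 + 1, hK1⟩)) ∧ o = [] := by
          have hδ := Prod.mk.inj (Option.some.inj hδ)
          exact ⟨hδ.1.symm, hδ.2.symm⟩
        obtain ⟨v', hv₂, hrun⟩ := ih ⟨j.1 + 1, hK1⟩ w₂ hrest (by simp; omega)
        refine ⟨v', ?_, by simpa using hrun⟩
        rw [hdropj]
        simp only [List.cons_append, List.nil_append]
        rw [hv₂]

lemma countInv :
    ∀ (u : List (X₁ ⊕ X₁)) (c : Fin (Fintype.card (X₂ ⊕ X₂))) (w : List (X₂ ⊕ X₂)),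
      TRun (tdelta f₁ f₂ x₀ wd) (some (Sum.inl c)) u none w →
      ∃ (m : ℕ) (hm : c.1 + m < Fintype.card (X₂ ⊕ X₂)) (u' : List (X₁ ⊕ X₁))
        (w' : List (X₂ ⊕ X₂)),
        u = List.replicate m (Sum.inl x₀) ++ Sum.inr x₀ ::
            (bodyW f₁ f₂ x₀ wd ((Fintype.equivFin (X₂ ⊕ X₂)).symm ⟨c.1 + m, hm⟩) ++ u') ∧
        w = (Fintype.equivFin (X₂ ⊕ X₂)).symm ⟨c.1 + m, hm⟩ :: w' ∧
        TRun (tdelta f₁ f₂ x₀ wd) none u' none w' := by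
  intro u
  induction u with
  | nil => intro c w hr; cases hr
  | cons d u₂ ih =>
    intro c w hr
    cases hr with
    | cons d o hδ hrest =>
      rename_i p' w₂
      simp only [tdelta] at hδ
      by_cases hdt : d = Sum.inl x₀
      · subst hdt
        rw [if_pos rfl] at hδ
        by_cases hc1 : c.1 + 1 < Fintype.card (X₂ ⊕ X₂)
        swap
        · simp [hc1] at hδ
        rw [dif_pos hc1] at hδ
        obtain ⟨rfl, rfl⟩ : p' = some (Sum.inl ⟨c.1 + 1, hc1⟩) ∧ o = [] := by
          have hδ := Prod.mk.inj (Option.some.inj hδ)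
          exact ⟨hδ.1.symm, hδ.2.symm⟩
        obtain ⟨m, hm, u', w', hu₂, hw₂, hrun⟩ := ih ⟨c.1 + 1, hc1⟩ w₂ hrest
        have hm0 : c.1 + 1 + m < Fintype.card (X₂ ⊕ X₂) := by simpa using hm
        have hm' : c.1 + (m + 1) < Fintype.card (X₂ ⊕ X₂) := by omega
        have he : (⟨c.1 + 1 + m, hm⟩ : Fin (Fintype.card (X₂ ⊕ X₂))) = ⟨c.1 + (m + 1), hm'⟩ :=
          Fin.ext (by simp; omega)
        refine ⟨m + 1, hm', u', w', ?_, ?_, hrun⟩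
        · rw [List.replicate_succ]
          simp only [List.cons_append, List.nil_append]
          rw [hu₂, he]
        · simp only [List.nil_append]
          rw [hw₂, he]
      · rw [if_neg hdt] at hδ
        by_cases hdt' : d = Sum.inr x₀
        swap
        · simp [hdt'] at hδ
        subst hdt'
        rw [if_pos rfl] at hδ
        set a := (Fintype.equivFin (X₂ ⊕ X₂)).symm c with ha
        by_cases hb : (bodyW f₁ f₂ x₀ wd a).length = 0
        · rw [if_pos hb] at hδ
          obtain ⟨rfl, rfl⟩ : p' = none ∧ o = [a] := by
            have hδ := Prod.mk.inj (Option.some.inj hδ)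
            exact ⟨hδ.1.symm, hδ.2.symm⟩
          refine ⟨0, by omega, u₂, w₂, ?_, ?_, hrest⟩
          · have : (⟨c.1 + 0, by omega⟩ : Fin _) = c := Fin.ext (by simp)
            rw [this, ← ha, List.length_eq_zero_iff.mp hb]
            simp
          · have : (⟨c.1 + 0, by omega⟩ : Fin _) = c := Fin.ext (by simp)
            rw [this, ← ha]
            simp
        · rw [if_neg hb] at hδ
          obtain ⟨rfl, rfl⟩ : p' = some (Sum.inr (a, ⟨0, Nat.succ_pos _⟩)) ∧ o = [a] := by
            have hδ := Prod.mk.inj (Option.some.inj hδ)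
            exact ⟨hδ.1.symm, hδ.2.symm⟩
          obtain ⟨v', hu₂, hrun⟩ := bodyInv f₁ f₂ x₀ wd a u₂ _ w₂ hrest (by simp; omega)
          refine ⟨0, by omega, v', w₂, ?_, ?_, hrun⟩
          · have hc : (⟨c.1 + 0, by omega⟩ : Fin _) = c := Fin.ext (by simp)
            rw [hc, ← ha]
            simp only [List.replicate, List.nil_append]
            rw [hu₂]
            simp
          · have hc : (⟨c.1 + 0, by omega⟩ : Fin _) = c := Fin.ext (by simp)
            rw [hc, ← ha]
            simp

lemma stepInv (u : List (X₁ ⊕ X₁)) (w : List (X₂ ⊕ X₂))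
    (hr : TRun (tdelta f₁ f₂ x₀ wd) none u none w) :
    (u = [] ∧ w = []) ∨
    ∃ a u' w', u = codeW f₁ f₂ x₀ wd a ++ u' ∧ w = a :: w' ∧
      TRun (tdelta f₁ f₂ x₀ wd) none u' none w' := by
  cases hr with
  | nil => exact Or.inl ⟨rfl, rfl⟩
  | cons d o hδ hrest =>
    rename_i p' u₂ w₂
    right
    simp only [tdelta] at hδ
    by_cases hdt : d = Sum.inl x₀
    swap
    · simp [hdt] at hδ
    subst hdt
    rw [if_pos rfl] at hδ
    by_cases hn : 0 < Fintype.card (X₂ ⊕ X₂)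
    swap
    · simp [hn] at hδ
    rw [dif_pos hn] at hδ
    obtain ⟨rfl, rfl⟩ : p' = some (Sum.inl ⟨0, hn⟩) ∧ o = [] := by
      have hδ := Prod.mk.inj (Option.some.inj hδ)
      exact ⟨hδ.1.symm, hδ.2.symm⟩
    obtain ⟨m, hm, u', w', hu₂, hw₂, hrun⟩ := countInv f₁ f₂ x₀ wd _ ⟨0, hn⟩ w₂ hrest
    set a := (Fintype.equivFin (X₂ ⊕ X₂)).symm ⟨0 + m, hm⟩ with ha
    refine ⟨a, u', w', ?_, by simpa using hw₂, hrun⟩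
    rw [codeW]
    have hea : ((Fintype.equivFin (X₂ ⊕ X₂)) a : ℕ) = m := by
      rw [ha, Equiv.apply_symm_apply]
      simp
    rw [hea, List.replicate_succ, hu₂]
    simp

lemma decodeInv (w : List (X₂ ⊕ X₂)) :
    ∀ u : List (X₁ ⊕ X₁), TRun (tdelta f₁ f₂ x₀ wd) none u none w →
      u = w.flatMap (codeW f₁ f₂ x₀ wd) := by
  induction w with
  | nil =>
    intro u hr
    rcases stepInv f₁ f₂ x₀ wd u [] hr with ⟨rfl, -⟩ | ⟨a, u', w', -, hw, -⟩
    · simp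
    · simp at hw
  | cons b w' ih =>
    intro u hr
    rcases stepInv f₁ f₂ x₀ wd u (b :: w') hr with ⟨-, hw⟩ | ⟨a, u', w'', hu, hw, hrun⟩
    · simp at hw
    · obtain ⟨rfl, rfl⟩ : a = b ∧ w'' = w' := by
        constructor <;> simp_all
      rw [hu, ih u' hrun]
      simp

end Decode
section Values
variable {X₁ X₂ G : Type} [Group G] [Fintype (X₂ ⊕ X₂)]
variable (f₁ : X₁ → G) (f₂ : X₂ → G) (x₀ : X₁) (wd : G → List (X₁ ⊕ X₁))

lemma valW_codeW (hwd : ∀ g, valW f₁ (wd g) = g) (a : X₂ ⊕ X₂) :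
    valW f₁ (codeW f₁ f₂ x₀ wd a) = nuF f₂ a := by
  simp only [codeW, bodyW, valW_append, valW_replicate, valW_cons, hwd]
  have h1 : nuF f₁ (Sum.inl x₀ : X₁ ⊕ X₁) = f₁ x₀ := rfl
  have h2 : nuF f₁ (Sum.inr x₀ : X₁ ⊕ X₁) = (f₁ x₀)⁻¹ := rfl
  rw [h1, h2]
  group

lemma valW_flatMap (hwd : ∀ g, valW f₁ (wd g) = g) (w : List (X₂ ⊕ X₂)) :
    valW f₁ (w.flatMap (codeW f₁ f₂ x₀ wd)) = valW f₂ w := by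
  induction w with
  | nil => simp
  | cons a w ih => simp [valW_codeW f₁ f₂ x₀ wd hwd, ih]

end Values

lemma univ_isContextFree {T : Type} [Finite T] :
    Language.IsContextFree (Set.univ : Language T) := by
  classical
  haveI := Fintype.ofFinite T
  refine ⟨⟨Unit, (), insert ⟨(), []⟩ ((Finset.univ : Finset T).image fun a =>
    ⟨(), [Symbol.terminal a, Symbol.nonterminal ()]⟩)⟩, ?_⟩
  have key : ∀ w : List T,
      w ∈ (⟨Unit, (), insert ⟨(), []⟩ ((Finset.univ : Finset T).image fun a =>
        ⟨(), [Symbol.terminal a, Symbol.nonterminal ()]⟩)⟩ : ContextFreeGrammar T).language := by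
    intro w
    rw [ContextFreeGrammar.mem_language_iff]
    induction w with
    | nil =>
      exact Relation.ReflTransGen.single ⟨⟨(), []⟩, Finset.mem_insert_self _ _,
        by simpa using ContextFreeRule.Rewrites.input_output⟩
    | cons a w ih =>
      refine Relation.ReflTransGen.head ⟨⟨(), [Symbol.terminal a, Symbol.nonterminal ()]⟩,
        Finset.mem_insert_of_mem (Finset.mem_image_of_mem _ (Finset.mem_univ a)),
        by simpa using ContextFreeRule.Rewrites.input_output⟩ ?_
      simpa using ih.append_left [Symbol.terminal a]
  ext w
  exact ⟨fun _ => Set.mem_univ w, fun _ => (ContextFreeGrammar.mem_language_iff _ _).mpr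
    ((ContextFreeGrammar.mem_language_iff _ _).mp (key w))⟩

theorem stmt_3' {X₁ X₂ G : Type} [Group G] [Finite X₁] [Finite X₂]
    (f₁ : X₁ → G) (f₂ : X₂ → G)
    (h₁ : Subgroup.closure (Set.range f₁) = ⊤)
    (h₂ : Subgroup.closure (Set.range f₂) = ⊤)
    (hcf : (wordProblem f₁).IsContextFree) :
    (wordProblem f₂).IsContextFree := by
  classical
  rcases isEmpty_or_nonempty X₁ with hX | hX
  · have hG : ∀ g : G, g = 1 := by
      intro g
      have hmem : g ∈ Subgroup.closure (Set.range f₁) := by rw [h₁]; trivial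
      rw [Set.range_eq_empty f₁, Subgroup.closure_empty, Subgroup.mem_bot] at hmem
      exact hmem
    have huniv : wordProblem f₂ = Set.univ := by
      ext w
      simp [wordProblem, hG]
    rw [huniv]
    exact univ_isContextFree
  · haveI : Fintype (X₂ ⊕ X₂) := Fintype.ofFinite _
    obtain ⟨g₁, hg₁⟩ := hcf
    have x₀ : X₁ := Classical.arbitrary X₁
    have hsurj := exists_word_of_closure f₁ h₁
    set wd : G → List (X₁ ⊕ X₁) := fun g => Classical.choose (hsurj g) with hwd_def
    have hwd : ∀ g, valW f₁ (wd g) = g := fun g => Classical.choose_spec (hsurj g)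
    refine ⟨transGrammar g₁ (tdelta f₁ f₂ x₀ wd) (none : QT f₁ f₂ x₀ wd), ?_⟩
    refine (transGrammar_language g₁ (tdelta f₁ f₂ x₀ wd) none).trans ?_
    ext w
    simp only [Set.mem_setOf_eq, hg₁]
    constructor
    · rintro ⟨u, hu, hrun⟩
      have hdec : u = w.flatMap (codeW f₁ f₂ x₀ wd) := decodeInv f₁ f₂ x₀ wd w u hrun
      subst hdec
      have hu' : valW f₁ (w.flatMap (codeW f₁ f₂ x₀ wd)) = 1 := by
        have := hu
        simp [wordProblem, wordProblemHom_eq_valW] at this; exact this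
      show wordProblemHom f₂ (FreeMonoid.ofList w) = 1
      rw [wordProblemHom_eq_valW, ← valW_flatMap f₁ f₂ x₀ wd hwd w]
      exact hu'
    · intro hw
      refine ⟨w.flatMap (codeW f₁ f₂ x₀ wd), ?_, encodeRun f₁ f₂ x₀ wd w⟩
      have hw' : valW f₂ w = 1 := by
        simp [wordProblem, wordProblemHom_eq_valW] at hw; exact hw
      show wordProblemHom f₁ (FreeMonoid.ofList (w.flatMap (codeW f₁ f₂ x₀ wd))) = 1
      rw [wordProblemHom_eq_valW, valW_flatMap f₁ f₂ x₀ wd hwd w]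
      exact hw'

theorem stmt_3 {X₁ X₂ G : Type} [Group G] [Finite X₁] [Finite X₂]
    (f₁ : X₁ → G) (f₂ : X₂ → G)
    (h₁ : Subgroup.closure (Set.range f₁) = ⊤)
    (h₂ : Subgroup.closure (Set.range f₂) = ⊤)
    (hcf : (wordProblem f₁).IsContextFree) :
    (wordProblem f₂).IsContextFree := by
  exact stmt_3' f₁ f₂ h₁ h₂ hcf
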